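/- Let δ, γ ∈ (−1, +∞) and let y ∈ K. Then y solves problem (P), i.e. ((1 + δ y(x)) y'(x))' + 2x(1 + γ y(x)) y'(x) = 0 on (0,∞), y(0) = 0 and lim_{x→+∞} y(x) = 1, if and only if T(y) = y. -/

import Mathlib

open Real Filter Set

/-- `F(x; h)` from the paper. -/
noncomputable def Fint (δ γ : ℝ) (h : ℝ → ℝ) (x : ℝ) : ℝ :=
  ∫ w in (0:ℝ)..x,
    Real.exp (-(∫ z in (0:ℝ)..w, 2*z*(1+γ*h z)/(1+δ*h z))) * (1/(1+δ*h w))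

/-- `y` solves problem (P): `((1+δy)y')' + 2x(1+γy)y' = 0` on `(0,∞)`,
`y(0) = 0` and `y(x) → 1` as `x → ∞`. -/
def SolvesP (δ γ : ℝ) (y : ℝ → ℝ) : Prop :=
  (∀ x ∈ Set.Ioi (0:ℝ), DifferentiableAt ℝ y x) ∧
  (∀ x ∈ Set.Ioi (0:ℝ),
    HasDerivAt (fun t => (1 + δ * y t) * deriv y t)
      (-(2 * x * (1 + γ * y x) * deriv y x)) x) ∧
  y 0 = 0 ∧ Tendsto y atTop (nhds 1)

/-- `y` belongs to the set `K` of bounded analytic functions on `[0,∞)` with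
`‖y‖∞ ≤ 1`, `y ≥ 0` and `y(0) = 0`. -/
def MemK (y : ℝ → ℝ) : Prop :=
  AnalyticOn ℝ y (Set.Ici 0) ∧ (∀ x ≥ (0:ℝ), 0 ≤ y x ∧ y x ≤ 1) ∧ y 0 = 0

/-- A function with zero derivative on an open interval, continuous on the closed
interval, takes equal values at the endpoints. -/
private lemma eq_of_deriv_zero {g : ℝ → ℝ} {s t : ℝ} (hst : s ≤ t)
    (hc : ContinuousOn g (Icc s t))
    (hd : ∀ x ∈ Ioo s t, HasDerivAt g 0 x) : g t = g s := by
  rcases eq_or_lt_of_le hst with h | h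
  · rw [h]
  · obtain ⟨c, hc', h0⟩ := exists_hasDerivAt_eq_slope g (fun _ => 0) h hc hd
    have hts : t - s ≠ 0 := sub_ne_zero.mpr (ne_of_gt h)
    have : g t - g s = 0 := by
      have := h0.symm
      field_simp at this
      linarith [this]
    linarith

theorem solution_iff_fixed_point (δ γ : ℝ) (hδ : -1 < δ) (hγ : -1 < γ)
    (y : ℝ → ℝ) (hy : MemK y)
    (L : ℝ) (hL : Tendsto (Fint δ γ y) atTop (nhds L)) :
    SolvesP δ γ y ↔ ∀ x ≥ (0:ℝ), Fint δ γ y x / L = y x := by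
  obtain ⟨hya, hyb, hy0⟩ := hy
  set q : ℝ → ℝ := fun z => 2*z*(1+γ*y z)/(1+δ*y z) with hq_def
  set N : ℝ → ℝ := fun w => ∫ z in (0:ℝ)..w, q z with hN_def
  set f : ℝ → ℝ := fun w => Real.exp (-(N w)) * (1/(1+δ*y w)) with hf_def
  have hFint : Fint δ γ y = fun x => ∫ w in (0:ℝ)..x, f w := rfl
  set m : ℝ := min 1 (1+δ) with hm_def
  have hm : 0 < m := lt_min one_pos (by linarith)
  have ha : ∀ x, 0 ≤ x → m ≤ 1 + δ * y x := by
    intro x hx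
    obtain ⟨h0, h1⟩ := hyb x hx
    rcases le_or_gt 0 δ with h | h
    · have := min_le_left 1 (1+δ); nlinarith
    · have := min_le_right 1 (1+δ); nlinarith
  have hapos : ∀ x, 0 ≤ x → 0 < 1 + δ * y x := fun x hx => lt_of_lt_of_le hm (ha x hx)
  have hane : ∀ x, 0 ≤ x → 1 + δ * y x ≠ 0 := fun x hx => ne_of_gt (hapos x hx)
  have hyc : ContinuousOn y (Ici 0) := hya.continuousOn
  have hac : ContinuousOn (fun x => 1 + δ * y x) (Ici 0) :=
    continuousOn_const.add (continuousOn_const.mul hyc)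
  have hqc : ContinuousOn q (Ici 0) := by
    apply ContinuousOn.div
    · exact (continuous_const.mul continuous_id).continuousOn.mul
        (continuousOn_const.add (continuousOn_const.mul hyc))
    · exact hac
    · exact fun x hx => hane x hx
  have hqInt : ∀ b, 0 ≤ b → IntervalIntegrable q MeasureTheory.volume 0 b := by
    intro b hb
    exact (hqc.mono (by rw [uIcc_of_le hb]; exact Icc_subset_Ici_self)).intervalIntegrable
  have hqIoi : ContinuousOn q (Ioi 0) := hqc.mono Ioi_subset_Ici_self
  have hNd : ∀ x, 0 < x → HasDerivAt N (q x) x := by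
    intro x hx
    exact intervalIntegral.integral_hasDerivAt_right (hqInt x hx.le)
      (AEStronglyMeasurable.stronglyMeasurableAtFilter_of_mem
        (hqIoi.aestronglyMeasurable measurableSet_Ioi) (Ioi_mem_nhds hx))
      (hqc.continuousAt (Ici_mem_nhds hx))
  have hNc : ∀ b, 0 ≤ b → ContinuousOn N (Icc 0 b) := by
    intro b hb
    have h1 : MeasureTheory.IntegrableOn q (uIcc 0 b) MeasureTheory.volume := by
      rw [uIcc_of_le hb]
      exact (hqc.mono Icc_subset_Ici_self).integrableOn_compact isCompact_Icc
    have := intervalIntegral.continuousOn_primitive_interval h1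
    rwa [uIcc_of_le hb] at this
  have hNIoi : ContinuousOn N (Ioi 0) := fun x hx =>
    ((hNd x hx).continuousAt).continuousWithinAt
  have hfc : ∀ b, 0 ≤ b → ContinuousOn f (Icc 0 b) := by
    intro b hb
    exact (Real.continuous_exp.comp_continuousOn (hNc b hb).neg).mul
      (continuousOn_const.div (hac.mono Icc_subset_Ici_self) (fun x hx => hane x hx.1))
  have hfIoi : ContinuousOn f (Ioi 0) :=
    (Real.continuous_exp.comp_continuousOn hNIoi.neg).mul
      (continuousOn_const.div (hac.mono Ioi_subset_Ici_self)
        (fun x hx => hane x (le_of_lt hx)))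
  have hfInt : ∀ b, 0 ≤ b → IntervalIntegrable f MeasureTheory.volume 0 b := by
    intro b hb
    exact ((hfc b hb).mono (by rw [uIcc_of_le hb])).intervalIntegrable
  have hfpos : ∀ w, 0 ≤ w → 0 < f w := by
    intro w hw
    exact mul_pos (Real.exp_pos _) (by rw [one_div]; exact inv_pos.mpr (hapos w hw))
  have hFd : ∀ x, 0 < x → HasDerivAt (Fint δ γ y) (f x) x := by
    intro x hx
    rw [hFint]
    exact intervalIntegral.integral_hasDerivAt_right (hfInt x hx.le)
      (AEStronglyMeasurable.stronglyMeasurableAtFilter_of_mem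
        (hfIoi.aestronglyMeasurable measurableSet_Ioi) (Ioi_mem_nhds hx))
      (hfIoi.continuousAt (Ioi_mem_nhds hx))
  have hFc : ∀ b, 0 ≤ b → ContinuousOn (Fint δ γ y) (Icc 0 b) := by
    intro b hb
    rw [hFint]
    have h1 : MeasureTheory.IntegrableOn f (uIcc 0 b) MeasureTheory.volume := by
      rw [uIcc_of_le hb]
      exact ((hfc b hb)).integrableOn_compact isCompact_Icc
    have := intervalIntegral.continuousOn_primitive_interval h1
    rwa [uIcc_of_le hb] at this
  have hF0 : Fint δ γ y 0 = 0 := intervalIntegral.integral_same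
  have hLpos : 0 < L := by
    have h1 : 0 < Fint δ γ y 1 := by
      rw [hFint]
      exact intervalIntegral.intervalIntegral_pos_of_pos_on (hfInt 1 zero_le_one)
        (fun x hx => hfpos x hx.1.le) one_pos
    have hmono : ∀ x, 1 ≤ x → Fint δ γ y 1 ≤ Fint δ γ y x := by
      intro x hx
      have h0x : (0:ℝ) ≤ x := le_trans zero_le_one hx
      have hint1x : IntervalIntegrable f MeasureTheory.volume 1 x := by
        apply ((hfc x h0x).mono ?_).intervalIntegrable
        rw [uIcc_of_le hx]
        exact Icc_subset_Icc zero_le_one le_rfl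
      have hsplit := intervalIntegral.integral_add_adjacent_intervals
        (hfInt 1 zero_le_one) hint1x
      have hnn : 0 ≤ ∫ w in (1:ℝ)..x, f w :=
        intervalIntegral.integral_nonneg hx
          (fun u hu => (hfpos u (le_trans zero_le_one hu.1)).le)
      rw [hFint]
      simp only []
      linarith [hsplit, hnn]
    exact lt_of_lt_of_le h1 (ge_of_tendsto hL ((eventually_ge_atTop 1).mono hmono))
  have hLne : L ≠ 0 := ne_of_gt hLpos
  constructor
  · rintro ⟨hdiff, hode, -, hylim⟩
    have hvd : ∀ x, 0 < x →
        HasDerivAt (fun t => ((1 + δ * y t) * deriv y t) * Real.exp (N t)) 0 x := by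
      intro x hx
      have h1 : HasDerivAt (fun t => (1 + δ * y t) * deriv y t)
          (-(2 * x * (1 + γ * y x) * deriv y x)) x := hode x hx
      have h2 : HasDerivAt (fun t => Real.exp (N t)) (Real.exp (N x) * q x) x :=
        (hNd x hx).exp
      have h3 : HasDerivAt (fun t => ((1 + δ * y t) * deriv y t) * Real.exp (N t)) _ x := h1.mul h2
      convert h3 using 1
      have hne := hane x hx.le
      rw [hq_def]
      dsimp only
      have key : (1 + δ * y x) * (2*x*(1+γ*y x)/(1+δ*y x)) = 2*x*(1+γ*y x) :=
        mul_div_cancel₀ _ hne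
      linear_combination (-(deriv y x * rexp (N x))) * key
    have hvconst : ∀ x, 0 < x →
        ((1 + δ * y x) * deriv y x) * Real.exp (N x)
          = ((1 + δ * y 1) * deriv y 1) * Real.exp (N 1) := by
      intro x hx
      have hcont : ∀ s t : ℝ, 0 < s →
          ContinuousOn (fun t => ((1 + δ * y t) * deriv y t) * Real.exp (N t)) (Icc s t) := by
        intro s t hs
        intro z hz
        exact ((hvd z (lt_of_lt_of_le hs hz.1)).differentiableAt.continuousAt).continuousWithinAt
      rcases le_total x 1 with h | h
      · exact (eq_of_deriv_zero h (hcont x 1 hx)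
          (fun z hz => hvd z (lt_of_lt_of_le hx hz.1.le))).symm
      · exact eq_of_deriv_zero h (hcont 1 x one_pos)
          (fun z hz => hvd z (lt_of_lt_of_le one_pos hz.1.le))
    set C : ℝ := ((1 + δ * y 1) * deriv y 1) * Real.exp (N 1) with hC_def
    have hud : ∀ x, 0 < x → deriv y x = C * f x := by
      intro x hx
      have h1 := hvconst x hx
      have hne := hane x hx.le
      have hexp := Real.exp_ne_zero (N x)
      rw [hf_def]
      simp only [Real.exp_neg]
      field_simp
      linarith [h1]
    have hDd : ∀ x, 0 < x →
        HasDerivAt (fun t => y t - C * Fint δ γ y t) 0 x := by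
      intro x hx
      have h1 : HasDerivAt y (C * f x) x := by
        have h2 := (hdiff x hx).hasDerivAt
        rwa [hud x hx] at h2
      have h2 := (hFd x hx).const_mul C
      have h3 : HasDerivAt (fun t => y t - C * Fint δ γ y t) _ x := h1.sub h2
      simpa using h3
    have hyF : ∀ x, 0 ≤ x → y x = C * Fint δ γ y x := by
      intro x hx
      have hcont : ContinuousOn (fun t => y t - C * Fint δ γ y t) (Icc 0 x) :=
        (hyc.mono Icc_subset_Ici_self).sub (continuousOn_const.mul (hFc x hx))
      have := eq_of_deriv_zero hx hcont (fun z hz => hDd z hz.1)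
      rw [hy0, hF0] at this
      simp at this
      linarith
    have h1 : Tendsto (fun x => C * Fint δ γ y x) atTop (nhds (C * L)) := hL.const_mul C
    have heq : (1:ℝ) = C * L := by
      refine tendsto_nhds_unique ?_ h1
      exact hylim.congr' (((eventually_ge_atTop (0:ℝ)).mono (fun x hx => hyF x hx)))
    intro x hx
    rw [hyF x hx]
    have hC : C = 1 / L := by
      field_simp
      linarith
    rw [hC]
    field_simp
  · intro hfix
    have hyeq : ∀ x, 0 ≤ x → y x = Fint δ γ y x * (1 / L) := by
      intro x hx
      rw [← hfix x hx]
      ring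
    have hyd : ∀ x, 0 < x → HasDerivAt y (f x * (1 / L)) x := by
      intro x hx
      have h1 := (hFd x hx).mul_const (1 / L)
      apply h1.congr_of_eventuallyEq
      filter_upwards [Ici_mem_nhds hx] with t ht
      exact hyeq t ht
    have hderiv : ∀ x, 0 < x → deriv y x = f x * (1 / L) := fun x hx => (hyd x hx).deriv
    refine ⟨fun x hx => (hyd x hx).differentiableAt, ?_, hy0, ?_⟩
    · intro x hx
      replace hx : 0 < x := hx
      have hGd : HasDerivAt (fun t => Real.exp (-(N t)) * (1 / L))
          (Real.exp (-(N x)) * (-(q x)) * (1 / L)) x := ((hNd x hx).neg.exp).mul_const _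
      have heqset : ∀ t, 0 < t → (1 + δ * y t) * deriv y t = Real.exp (-(N t)) * (1 / L) := by
        intro t ht
        rw [hderiv t ht, hf_def]
        have hne := hane t ht.le
        field_simp
      have hmain : HasDerivAt (fun t => (1 + δ * y t) * deriv y t)
          (Real.exp (-(N x)) * (-(q x)) * (1 / L)) x := by
        apply hGd.congr_of_eventuallyEq
        filter_upwards [Ioi_mem_nhds hx] with t ht
        exact heqset t ht
      convert hmain using 1
      rw [hderiv x hx, hf_def, hq_def]
      have hne := hane x hx.le
      field_simp
    · have h1 : Tendsto (fun x => Fint δ γ y x * (1 / L)) atTop (nhds (L * (1 / L))) :=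
        hL.mul_const _
      rw [mul_one_div, div_self hLne] at h1
      exact h1.congr' (((eventually_ge_atTop (0:ℝ)).mono (fun x hx => (hyeq x hx).symm)))
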